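/- Let G be a simple graph on a finite vertex set V and let k, u : V → ℕ satisfy k(v) ≤ u(N[v]) for all v ∈ V. Define k' : V → ℕ by k'(v) = u(N[v]) − k(v). Then L_{k,u}(G) = u(V) − γ_{k',u}(G) (note that the function u itself is a (k',u)-dominating function, so γ_{k',u}(G) is well defined). -/
import Mathlib


open Classical Finset

/-- The closed neighborhood `N[v]` of `v` in `G`, as a finset. -/
noncomputable def closedNbhd {V : Type*} [Fintype V] (G : SimpleGraph V) (v : V) : Finset V :=
  Finset.univ.filter (fun w => G.Adj v w ∨ w = v)

lemma mem_closedNbhd_self {V : Type*} [Fintype V] (G : SimpleGraph V) (v : V) :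
    v ∈ closedNbhd G v := by simp [closedNbhd]

/-- `f` is a `(k,u)`-dominating function of `G`. -/
def IsDomFn {V : Type*} [Fintype V] (G : SimpleGraph V) (k u f : V → ℕ) : Prop :=
  ∀ v, f v ≤ u v ∧ k v ≤ ∑ w ∈ closedNbhd G v, f w

/-- `f` is a `(k,u)`-packing function of `G`. -/
def IsPackFn {V : Type*} [Fintype V] (G : SimpleGraph V) (k u f : V → ℕ) : Prop :=
  ∀ v, f v ≤ u v ∧ ∑ w ∈ closedNbhd G v, f w ≤ k v

/-- `γ_{k,u}(G)`: minimum weight of a `(k,u)`-dominating function. -/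
noncomputable def gammaKU {V : Type*} [Fintype V] (G : SimpleGraph V) (k u : V → ℕ) : ℕ :=
  sInf {s | ∃ f, IsDomFn G k u f ∧ s = ∑ v, f v}

/-- `L_{k,u}(G)`: maximum weight of a `(k,u)`-packing function. -/
noncomputable def LKU {V : Type*} [Fintype V] (G : SimpleGraph V) (k u : V → ℕ) : ℕ :=
  sSup {s | ∃ f, IsPackFn G k u f ∧ s = ∑ v, f v}

lemma sub_sum_aux {V : Type*} (s : Finset V) (f g : V → ℕ) (h : ∀ v, g v ≤ f v) :
    ∑ v ∈ s, (f v - g v) = ∑ v ∈ s, f v - ∑ v ∈ s, g v := by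
  have : ∑ v ∈ s, (f v - g v) + ∑ v ∈ s, g v = ∑ v ∈ s, f v := by
    rw [← Finset.sum_add_distrib]
    exact Finset.sum_congr rfl fun v _ => Nat.sub_add_cancel (h v)
  omega

/-- if `k(v) ≤ u(N[v])` for all `v` and `k'(v) = u(N[v]) - k(v)`,
then `L_{k,u}(G) = u(V) - γ_{k',u}(G)`. -/
theorem stmt_0 {V : Type*} [Fintype V] (G : SimpleGraph V) (k u : V → ℕ)
    (hk : ∀ v, k v ≤ ∑ w ∈ closedNbhd G v, u w) :
    LKU G k u =
      (∑ v, u v) - gammaKU G (fun v => (∑ w ∈ closedNbhd G v, u w) - k v) u := by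
  set k' : V → ℕ := fun v => (∑ w ∈ closedNbhd G v, u w) - k v with hk'
  set A : ℕ := ∑ v, u v with hA
  set T : Set ℕ := {s | ∃ f, IsDomFn G k' u f ∧ s = ∑ v, f v} with hT
  set S : Set ℕ := {s | ∃ f, IsPackFn G k u f ∧ s = ∑ v, f v} with hS
  -- T is nonempty: u itself is dominating
  have hTne : T.Nonempty := ⟨A, u, fun v => ⟨le_rfl, Nat.sub_le _ _⟩, rfl⟩
  -- S is nonempty and bounded above by A
  have hSne : S.Nonempty := ⟨0, (fun _ => 0), fun v => ⟨Nat.zero_le _, by simp⟩, by simp⟩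
  have hSbdd : ∀ s ∈ S, s ≤ A := by
    rintro s ⟨f, hf, rfl⟩
    exact Finset.sum_le_sum fun v _ => (hf v).1
  -- γ is attained
  have hγmem : gammaKU G k' u ∈ T := Nat.sInf_mem hTne
  obtain ⟨g, hg, hγ⟩ := hγmem
  -- L is attained
  have hLmem : LKU G k u ∈ S := Nat.sSup_mem hSne ⟨A, fun s hs => hSbdd s hs⟩
  obtain ⟨f, hf, hL⟩ := hLmem
  -- from g dominating, u - g is packing
  have hpack : IsPackFn G k u (fun v => u v - g v) := by
    intro v
    refine ⟨Nat.sub_le _ _, ?_⟩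
    rw [sub_sum_aux _ _ _ (fun w => (hg w).1)]
    have h1 := (hg v).2
    have h2 := hk v
    simp only [hk'] at h1
    omega
  have hAγ : A - gammaKU G k' u ∈ S :=
    ⟨fun v => u v - g v, hpack, by rw [sub_sum_aux _ _ _ (fun w => (hg w).1), ← hγ]⟩
  have h1 : A - gammaKU G k' u ≤ LKU G k u :=
    le_csSup ⟨A, fun s hs => hSbdd s hs⟩ hAγ
  -- from f packing, u - f is dominating
  have hdom : IsDomFn G k' u (fun v => u v - f v) := by
    intro v
    refine ⟨Nat.sub_le _ _, ?_⟩
    rw [sub_sum_aux _ _ _ (fun w => (hf w).1)]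
    have h1 := (hf v).2
    simp only [hk']
    omega
  have h2 : gammaKU G k' u ≤ A - LKU G k u := by
    apply Nat.sInf_le
    exact ⟨fun v => u v - f v, hdom, by rw [sub_sum_aux _ _ _ (fun w => (hf w).1), ← hL]⟩
  have hLA : LKU G k u ≤ A := by
    rw [hL]; exact Finset.sum_le_sum fun v _ => (hf v).1
  omega
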